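/- Let G be the group of the toroidal hypermap (3,3,3)_{(s,0)} with s ≥ 2, u = ρ0ρ1ρ2ρ1, and let d be a divisor of s. Then H = ⟨u^d⟩ ⋊ ⟨ρ0⟩ = ⟨u^d, ρ0⟩ is a core-free subgroup of G of index 3ds. -/

import Mathlib

/-- Relations of the affine Coxeter group of type Ã₂ (three involutory generators,
all pairwise products of order 3), together with one extra relator. -/
def triRels (extra : FreeGroup (Fin 3)) : Set (FreeGroup (Fin 3)) :=
  {r | ∃ i : Fin 3, r = FreeGroup.of i ^ 2} ∪
  {r | ∃ i j : Fin 3, i ≠ j ∧ r = (FreeGroup.of i * FreeGroup.of j) ^ 3} ∪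
  {extra}

/-- The free-group word ρ0 ρ1 ρ2 ρ1 (the translation u). -/
def uWord : FreeGroup (Fin 3) :=
  FreeGroup.of 0 * FreeGroup.of 1 * FreeGroup.of 2 * FreeGroup.of 1

/-- The group of the toroidal hypermap (3,3,3)_{(s,0)}. -/
abbrev Hyp0 (s : ℕ) := PresentedGroup (triRels (uWord ^ s))

/-- The group of the toroidal hypermap (3,3,3)_{(s,s)}. -/
abbrev HypSS (s : ℕ) :=
  PresentedGroup (triRels ((FreeGroup.of 0 * FreeGroup.of 1 * FreeGroup.of 2) ^ (2 * s)))

namespace S8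
variable {s : ℕ}

lemma rel_one {r : FreeGroup (Fin 3)} (h : r ∈ triRels (uWord ^ s)) :
    PresentedGroup.mk _ r = (1 : Hyp0 s) :=
  (QuotientGroup.eq_one_iff r).2 (Subgroup.subset_normalClosure h)

lemma sq (i : Fin 3) : (PresentedGroup.of i : Hyp0 s) * PresentedGroup.of i = 1 := by
  have := rel_one (s := s) (Or.inl (Or.inl ⟨i, rfl⟩))
  rw [map_pow] at this
  rw [← pow_two]; exact this

lemma cube {i j : Fin 3} (hij : i ≠ j) :
    ((PresentedGroup.of i : Hyp0 s) * PresentedGroup.of j) ^ 3 = 1 := by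
  have := rel_one (s := s) (Or.inl (Or.inr ⟨i, j, hij, rfl⟩))
  rwa [map_pow, map_mul] at this

section defs
variable (s)
def a : Hyp0 s := PresentedGroup.of 0
def b : Hyp0 s := PresentedGroup.of 1
def c : Hyp0 s := PresentedGroup.of 2
def u : Hyp0 s := a s * b s * c s * b s
def v : Hyp0 s := b s * a s * b s * c s
end defs

local notation "a'" => a s
local notation "b'" => b s
local notation "c'" => c s
local notation "u'" => u s
local notation "v'" => v s

lemma upow_s : u' ^ s = 1 := by
  have := rel_one (s := s) (Or.inr rfl)
  rw [map_pow] at this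
  have h2 : (PresentedGroup.mk (triRels (uWord ^ s))) uWord
      = (PresentedGroup.of 0 : Hyp0 s) * .of 1 * .of 2 * .of 1 := rfl
  rwa [h2] at this

lemma haa : a' * a' = 1 := sq 0
lemma hbb : b' * b' = 1 := sq 1
lemma hcc : c' * c' = 1 := sq 2
lemma inv_a : (a')⁻¹ = a' := inv_eq_of_mul_eq_one_right haa
lemma inv_b : (b')⁻¹ = b' := inv_eq_of_mul_eq_one_right hbb
lemma inv_c : (c')⁻¹ = c' := inv_eq_of_mul_eq_one_right hcc

lemma braid_ab : a' * b' * a' = b' * a' * b' := by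
  have h2 := cube (s := s) (i := 0) (j := 1) (by decide)
  have h1 : (a' * b' * a') * (b' * a' * b') = 1 := by
    rw [← h2]; simp only [pow_succ, pow_zero, one_mul, mul_assoc, a, b, c]
  rw [eq_inv_of_mul_eq_one_left h1, mul_inv_rev, mul_inv_rev, inv_a, inv_b, mul_assoc]

lemma braid_bc : b' * c' * b' = c' * b' * c' := by
  have h2 := cube (s := s) (i := 1) (j := 2) (by decide)
  have h1 : (b' * c' * b') * (c' * b' * c') = 1 := by
    rw [← h2]; simp only [pow_succ, pow_zero, one_mul, mul_assoc, a, b, c]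
  rw [eq_inv_of_mul_eq_one_left h1, mul_inv_rev, mul_inv_rev, inv_b, inv_c, mul_assoc]

lemma braid_ac : a' * c' * a' = c' * a' * c' := by
  have h2 := cube (s := s) (i := 0) (j := 2) (by decide)
  have h1 : (a' * c' * a') * (c' * a' * c') = 1 := by
    rw [← h2]; simp only [pow_succ, pow_zero, one_mul, mul_assoc, a, b, c]
  rw [eq_inv_of_mul_eq_one_left h1, mul_inv_rev, mul_inv_rev, inv_a, inv_c, mul_assoc]

-- continuation forms
lemma a2 (x : Hyp0 s) : a' * (a' * x) = x := by rw [← mul_assoc, haa, one_mul]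
lemma b2 (x : Hyp0 s) : b' * (b' * x) = x := by rw [← mul_assoc, hbb, one_mul]
lemma c2 (x : Hyp0 s) : c' * (c' * x) = x := by rw [← mul_assoc, hcc, one_mul]
lemma ABc (x : Hyp0 s) : a' * (b' * (a' * x)) = b' * (a' * (b' * x)) := by
  rw [← mul_assoc, ← mul_assoc, braid_ab, mul_assoc, mul_assoc]
lemma BCc (x : Hyp0 s) : b' * (c' * (b' * x)) = c' * (b' * (c' * x)) := by
  rw [← mul_assoc, ← mul_assoc, braid_bc, mul_assoc, mul_assoc]
lemma ACc (x : Hyp0 s) : a' * (c' * (a' * x)) = c' * (a' * (c' * x)) := by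
  rw [← mul_assoc, ← mul_assoc, braid_ac, mul_assoc, mul_assoc]
lemma ACb : a' * (c' * a') = c' * (a' * c') := by
  rw [← mul_assoc, braid_ac, mul_assoc]
lemma BCb : b' * (c' * b') = c' * (b' * c') := by
  rw [← mul_assoc, braid_bc, mul_assoc]
lemma BA3b : b' * (a' * (b' * (a' * (b' * a')))) = 1 := by
  have h2 := cube (s := s) (i := 1) (j := 0) (by decide)
  rw [← h2]; simp only [pow_succ, pow_zero, one_mul, mul_assoc, a, b, c]

lemma BAc (x : Hyp0 s) : b' * (a' * (b' * x)) = a' * (b' * (a' * x)) := (ABc x).symm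

lemma aua : a' * u' * a' = (u')⁻¹ := by
  simp only [u, v, mul_inv_rev, inv_a, inv_b, inv_c, mul_assoc, a2, b2, c2, haa, hbb, hcc, mul_one]
lemma bub : b' * u' * b' = v' := by
  simp only [u, v, mul_assoc, a2, b2, c2, haa, hbb, hcc, mul_one]
lemma bvb : b' * v' * b' = u' := by
  simp only [u, v, mul_assoc, a2, b2, c2, haa, hbb, hcc, mul_one]
lemma cvc : c' * v' * c' = (v')⁻¹ := by
  simp only [u, v, mul_inv_rev, inv_a, inv_b, inv_c, mul_assoc, a2, b2, c2, haa, hbb, hcc, mul_one]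
lemma ava : a' * v' * a' = (u')⁻¹ * v' := by
  simp only [u, v, mul_inv_rev, inv_a, inv_b, inv_c, mul_assoc, a2, b2, c2, haa, hbb, hcc, mul_one]
  rw [ABc, b2, ACb, ABc, b2, b2]
lemma cuc : c' * u' * c' = u' * (v')⁻¹ := by
  simp only [u, v, mul_inv_rev, inv_a, inv_b, inv_c, mul_assoc, a2, b2, c2, haa, hbb, hcc, mul_one]
  rw [BCc, hcc, mul_one, ← BCc, b2, b2, ACc]
lemma c_eq : c' = (v')⁻¹ * (a' * (b' * a')) := by
  simp only [v, mul_inv_rev, inv_a, inv_b, inv_c, mul_assoc]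
  rw [BA3b, mul_one]
lemma comm_uv : u' * v' = v' * u' := by
  have hw : u' * v' = a' * (b' * (c' * (a' * (b' * c')))) := by
    simp only [u, v, mul_assoc, b2]
  have hbw : b' * (u' * v') = (u' * v') * b' := by
    rw [hw]
    simp only [mul_assoc]
    rw [BAc, ACc, ← BCb]
  have e1 : v' = b' * u' * (b')⁻¹ := by rw [inv_b, ← bub]
  have e2 : u' = b' * v' * (b')⁻¹ := by rw [inv_b, ← bvb]
  refine Eq.symm ?_
  calc v' * u' = (b' * u' * (b')⁻¹) * (b' * v' * (b')⁻¹) := by rw [← e1, ← e2]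
    _ = b' * (u' * v') * (b')⁻¹ := by group
    _ = (u' * v') * b' * (b')⁻¹ := by rw [hbw]
    _ = u' * v' := mul_inv_cancel_right _ _

-- ## Permutation model
abbrev X (s : ℕ) := ZMod s × ZMod s × Fin 6

def ka : Fin 6 → Fin 6 := ![1,0,3,2,5,4]
def kb : Fin 6 → Fin 6 := ![2,4,0,5,1,3]
def kc : Fin 6 → Fin 6 := ![5,3,4,1,2,0]

def pa (s : ℕ) : Equiv.Perm (X s) :=
  Function.Involutive.toPerm (fun p => (-p.1-p.2.1, p.2.1, ka p.2.2)) (by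
    rintro ⟨m, n, k⟩
    refine Prod.ext ?_ (Prod.ext rfl ?_) <;> simp only
    · ring
    · fin_cases k <;> rfl)

def pb (s : ℕ) : Equiv.Perm (X s) :=
  Function.Involutive.toPerm (fun p => (p.2.1, p.1, kb p.2.2)) (by
    rintro ⟨m, n, k⟩
    refine Prod.ext rfl (Prod.ext rfl ?_)
    fin_cases k <;> rfl)

def pc (s : ℕ) : Equiv.Perm (X s) :=
  Function.Involutive.toPerm (fun p => (p.1, -p.1-p.2.1-1, kc p.2.2)) (by
    rintro ⟨m, n, k⟩
    refine Prod.ext rfl (Prod.ext ?_ ?_) <;> simp only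
    · ring
    · fin_cases k <;> rfl)

lemma pa_apply (p : X s) : pa s p = (-p.1-p.2.1, p.2.1, ka p.2.2) := rfl
lemma pb_apply (p : X s) : pb s p = (p.2.1, p.1, kb p.2.2) := rfl
lemma pc_apply (p : X s) : pc s p = (p.1, -p.1-p.2.1-1, kc p.2.2) := rfl

def fp (s : ℕ) : Fin 3 → Equiv.Perm (X s) := ![pa s, pb s, pc s]

lemma cube_perm {G : Type*} [Group G] {g h : G} (hgh : (g*h)^3 = 1) : (h*g)^3 = 1 := by
  have h1 : (h*g)^3 * h = h * (g*h)^3 := by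
    simp only [pow_succ, pow_zero, one_mul, mul_assoc]
  have h2 : (h*g)^3 * h = 1 * h := by rw [h1, hgh, mul_one, one_mul]
  exact mul_right_cancel h2

lemma pab3 : (pa s * pb s)^3 = 1 := by
  apply Equiv.ext
  rintro ⟨m, n, k⟩
  simp only [pow_succ, pow_zero, one_mul, Equiv.Perm.mul_apply, pa_apply, pb_apply,
    Equiv.Perm.one_apply]
  refine Prod.ext ?_ (Prod.ext ?_ ?_) <;> dsimp only
  · ring
  · ring
  · fin_cases k <;> rfl

lemma pbc3 : (pb s * pc s)^3 = 1 := by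
  apply Equiv.ext
  rintro ⟨m, n, k⟩
  simp only [pow_succ, pow_zero, one_mul, Equiv.Perm.mul_apply, pb_apply, pc_apply,
    Equiv.Perm.one_apply]
  refine Prod.ext ?_ (Prod.ext ?_ ?_) <;> dsimp only
  · ring
  · ring
  · fin_cases k <;> rfl

lemma pac3 : (pa s * pc s)^3 = 1 := by
  apply Equiv.ext
  rintro ⟨m, n, k⟩
  simp only [pow_succ, pow_zero, one_mul, Equiv.Perm.mul_apply, pa_apply, pc_apply,
    Equiv.Perm.one_apply]
  refine Prod.ext ?_ (Prod.ext ?_ ?_) <;> dsimp only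
  · ring
  · ring
  · fin_cases k <;> rfl

def Uperm (s : ℕ) : Equiv.Perm (X s) := pa s * pb s * pc s * pb s

lemma Uperm_apply (p : X s) : Uperm s p = (p.1 + 1, p.2.1, p.2.2) := by
  obtain ⟨m, n, k⟩ := p
  simp only [Uperm, Equiv.Perm.mul_apply, pa_apply, pb_apply, pc_apply]
  refine Prod.ext ?_ (Prod.ext rfl ?_)
  · ring
  · fin_cases k <;> rfl

lemma Uperm_pow (t : ℕ) (p : X s) : (Uperm s ^ t) p = (p.1 + t, p.2.1, p.2.2) := by
  induction t with
  | zero => simp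
  | succ n ih =>
    rw [pow_succ', Equiv.Perm.mul_apply, ih, Uperm_apply]
    refine Prod.ext ?_ rfl
    push_cast
    ring

def Vperm (s : ℕ) : Equiv.Perm (X s) := pb s * pa s * pb s * pc s

lemma Vperm_apply (p : X s) : Vperm s p = (p.1, p.2.1 + 1, p.2.2) := by
  obtain ⟨m, n, k⟩ := p
  simp only [Vperm, Equiv.Perm.mul_apply, pa_apply, pb_apply, pc_apply]
  refine Prod.ext rfl (Prod.ext ?_ ?_)
  · ring
  · fin_cases k <;> rfl

lemma Vperm_pow (t : ℕ) (p : X s) : (Vperm s ^ t) p = (p.1, p.2.1 + t, p.2.2) := by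
  induction t with
  | zero => simp
  | succ n ih =>
    rw [pow_succ', Equiv.Perm.mul_apply, ih, Vperm_apply]
    refine Prod.ext rfl (Prod.ext ?_ rfl)
    push_cast
    ring

lemma pa2 : pa s * pa s = 1 := by
  apply Equiv.ext; rintro ⟨m, n, k⟩
  simp only [Equiv.Perm.mul_apply, pa_apply, Equiv.Perm.one_apply]
  refine Prod.ext ?_ (Prod.ext rfl ?_)
  · ring
  · fin_cases k <;> rfl

lemma pb2 : pb s * pb s = 1 := by
  apply Equiv.ext; rintro ⟨m, n, k⟩
  simp only [Equiv.Perm.mul_apply, pb_apply, Equiv.Perm.one_apply]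
  refine Prod.ext rfl (Prod.ext rfl ?_)
  fin_cases k <;> rfl

lemma pc2 : pc s * pc s = 1 := by
  apply Equiv.ext; rintro ⟨m, n, k⟩
  simp only [Equiv.Perm.mul_apply, pc_apply, Equiv.Perm.one_apply]
  refine Prod.ext rfl (Prod.ext ?_ ?_)
  · ring
  · fin_cases k <;> rfl

lemma Uperm_s : Uperm s ^ s = 1 := by
  apply Equiv.ext; rintro ⟨m, n, k⟩
  rw [Uperm_pow]
  simp [ZMod.natCast_self]

lemma hrels : ∀ r ∈ triRels (uWord ^ s), FreeGroup.lift (fp s) r = 1 := by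
  rintro r (⟨⟨i, rfl⟩ | ⟨i, j, hij, rfl⟩⟩ | hr)
  · rw [map_pow, FreeGroup.lift_apply_of, pow_two]
    fin_cases i
    · exact pa2
    · exact pb2
    · exact pc2
  · rw [map_pow, map_mul, FreeGroup.lift_apply_of, FreeGroup.lift_apply_of]
    fin_cases i <;> fin_cases j
    · exact absurd rfl hij
    · exact pab3
    · exact pac3
    · exact cube_perm pab3
    · exact absurd rfl hij
    · exact pbc3
    · exact cube_perm pac3
    · exact cube_perm pbc3
    · exact absurd rfl hij
  · have hr' : r = uWord ^ s := hr
    subst hr'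
    rw [map_pow]
    have hlu : FreeGroup.lift (fp s) uWord = Uperm s := by
      have : uWord = FreeGroup.of 0 * FreeGroup.of 1 * FreeGroup.of 2 * FreeGroup.of 1 := rfl
      rw [this, map_mul, map_mul, map_mul, FreeGroup.lift_apply_of, FreeGroup.lift_apply_of,
        FreeGroup.lift_apply_of]
      rfl
    rw [hlu, Uperm_s]

def φ : Hyp0 s →* Equiv.Perm (X s) := PresentedGroup.toGroup hrels

lemma φa : φ (a s) = pa s := PresentedGroup.toGroup.of hrels
lemma φb : φ (b s) = pb s := PresentedGroup.toGroup.of hrels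
lemma φc : φ (c s) = pc s := PresentedGroup.toGroup.of hrels
lemma φu : φ (u s) = Uperm s := by
  rw [u, map_mul, map_mul, map_mul, φa, φb, φc]; rfl
lemma φv : φ (v s) = Vperm s := by
  rw [v, map_mul, map_mul, map_mul, φb, φa, φc]; rfl

-- ## Normal forms
section NF
variable [NeZero s]

def hG (s : ℕ) : Fin 6 → Hyp0 s :=
  ![1, a s, b s, a s * b s, b s * a s, a s * (b s * a s)]

def U : ZMod s → Hyp0 s := fun x => u s ^ x.val
def V : ZMod s → Hyp0 s := fun x => v s ^ x.val

local notation "U'" => U (s := s)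
local notation "V'" => V (s := s)

lemma conj_invol {g t w : Hyp0 s} (hg : g * g = 1) (h : g * t * g = w) (n : ℕ) :
    g * t ^ n * g = w ^ n := by
  have hinv : g⁻¹ = g := inv_eq_of_mul_eq_one_right hg
  rw [← h]
  calc g * t ^ n * g = g * t ^ n * g⁻¹ := by rw [hinv]
    _ = (g * t * g⁻¹) ^ n := conj_pow.symm
    _ = (g * t * g) ^ n := by rw [hinv]

lemma vpow_s : v' ^ s = 1 := by
  rw [← conj_invol hbb bub s, upow_s, mul_one, hbb]

lemma U_add (x y : ZMod s) : U' (x + y) = U' x * U' y := by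
  simp only [U]
  rw [ZMod.val_add, ← pow_eq_pow_mod _ upow_s, pow_add]

lemma V_add (x y : ZMod s) : V' (x + y) = V' x * V' y := by
  simp only [V]
  rw [ZMod.val_add, ← pow_eq_pow_mod _ vpow_s, pow_add]

lemma U_zero : U' 0 = 1 := by simp only [U]; rw [ZMod.val_zero, pow_zero]
lemma V_zero : V' 0 = 1 := by simp only [V]; rw [ZMod.val_zero, pow_zero]

lemma U_inv (x : ZMod s) : (U' x)⁻¹ = U' (-x) :=
  inv_eq_of_mul_eq_one_right (by rw [← U_add, add_neg_cancel, U_zero])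
lemma V_inv (x : ZMod s) : (V' x)⁻¹ = V' (-x) :=
  inv_eq_of_mul_eq_one_right (by rw [← V_add, add_neg_cancel, V_zero])

lemma UV_comm (x y : ZMod s) : U' x * V' y = V' y * U' x :=
  Commute.pow_pow (comm_uv) _ _

lemma aU (x : ZMod s) : a' * U' x * a' = U' (-x) := by
  rw [← U_inv]
  simp only [U]
  rw [conj_invol haa aua, inv_pow]

lemma aV (x : ZMod s) : a' * V' x * a' = U' (-x) * V' x := by
  have h1 : a' * v' ^ x.val * a' = ((u')⁻¹ * v') ^ x.val := conj_invol haa ava _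
  have h2 : ((u')⁻¹ * v') ^ x.val = ((u')⁻¹) ^ x.val * v' ^ x.val :=
    Commute.mul_pow (Commute.inv_left comm_uv) _
  rw [← U_inv]
  simp only [U, V]
  rw [h1, h2, inv_pow]

lemma bU (x : ZMod s) : b' * U' x * b' = V' x := conj_invol hbb bub _
lemma bV (x : ZMod s) : b' * V' x * b' = U' x := conj_invol hbb bvb _

lemma cU (x : ZMod s) : c' * U' x * c' = U' x * V' (-x) := by
  have h1 : c' * u' ^ x.val * c' = (u' * (v')⁻¹) ^ x.val := conj_invol hcc cuc _
  have h2 : (u' * (v')⁻¹) ^ x.val = u' ^ x.val * ((v')⁻¹) ^ x.val :=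
    Commute.mul_pow (Commute.inv_right comm_uv) _
  rw [← V_inv]
  simp only [U, V]
  rw [h1, h2, inv_pow]

lemma cV (x : ZMod s) : c' * V' x * c' = V' (-x) := by
  rw [← V_inv]
  simp only [V]
  rw [conj_invol hcc cvc, inv_pow]

-- hG action lemmas
lemma braid_n : b' * (a' * b') = a' * (b' * a') := by
  simp only [← mul_assoc]; exact braid_ab.symm

lemma a_hG (k : Fin 6) : a' * hG s k = hG s (ka k) := by
  fin_cases k
  · exact mul_one a'
  · exact haa
  · rfl
  · exact a2 _
  · rfl
  · exact a2 _

lemma b_hG (k : Fin 6) : b' * hG s k = hG s (kb k) := by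
  fin_cases k
  · exact mul_one b'
  · rfl
  · exact hbb
  · exact braid_n
  · exact b2 _
  · show b' * (a' * (b' * a')) = a' * b'
    have h1 : b' * (a' * (b' * a')) = (b' * a' * b') * a' := by simp only [mul_assoc]
    rw [h1, ← braid_ab]
    simp only [mul_assoc, haa, mul_one]

lemma aba_hG (k : Fin 6) : (a' * (b' * a')) * hG s k = hG s (kc k) := by
  fin_cases k
  · exact mul_one _
  · show (a' * (b' * a')) * a' = a' * b'
    simp only [mul_assoc, haa, mul_one]
  · show (a' * (b' * a')) * b' = b' * a'
    simp only [mul_assoc]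
    rw [ABc]
    simp only [hbb, mul_one]
  · show (a' * (b' * a')) * (a' * b') = a'
    simp only [mul_assoc, a2, hbb, mul_one]
  · show (a' * (b' * a')) * (b' * a') = b'
    simp only [mul_assoc]
    rw [ABc]
    simp only [b2, haa, mul_one]
  · show (a' * (b' * a')) * (a' * (b' * a')) = 1
    simp only [mul_assoc, a2, b2, haa]

lemma c_hG (k : Fin 6) : c' * hG s k = (v')⁻¹ * hG s (kc k) := by
  rw [c_eq, mul_assoc, aba_hG]

def ι : X s → Hyp0 s := fun p => U' p.1 * V' p.2.1 * hG s p.2.2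

lemma vinv_eq [Fact (1 < s)] : (v')⁻¹ = V' (-1) := by
  refine inv_eq_of_mul_eq_one_left ?_
  have h1 : V' 1 = v' := by show v' ^ _ = v'; rw [ZMod.val_one, pow_one]
  rw [← h1, ← V_add, neg_add_cancel, V_zero]

lemma action_a (p : X s) : a' * ι (s := s) p = ι (s := s) (pa s p) := by
  obtain ⟨m, n, k⟩ := p
  show a' * (U' m * V' n * hG s k) = U' (-m - n) * V' n * hG s (ka k)
  have e1 : a' * (U' m * V' n * hG s k)
      = (a' * U' m * a') * (a' * V' n * a') * (a' * hG s k) := by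
    simp only [mul_assoc, a2]
  rw [e1, aU, aV, a_hG, show (-m - n : ZMod s) = -m + -n by ring, U_add]
  simp only [mul_assoc]

lemma action_b (p : X s) : b' * ι (s := s) p = ι (s := s) (pb s p) := by
  obtain ⟨m, n, k⟩ := p
  show b' * (U' m * V' n * hG s k) = U' n * V' m * hG s (kb k)
  have e1 : b' * (U' m * V' n * hG s k)
      = (b' * U' m * b') * (b' * V' n * b') * (b' * hG s k) := by
    simp only [mul_assoc, b2]
  rw [e1, bU, bV, b_hG, UV_comm]

lemma action_c [Fact (1 < s)] (p : X s) : c' * ι (s := s) p = ι (s := s) (pc s p) := by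
  obtain ⟨m, n, k⟩ := p
  show c' * (U' m * V' n * hG s k) = U' m * V' (-m - n - 1) * hG s (kc k)
  have e1 : c' * (U' m * V' n * hG s k)
      = (c' * U' m * c') * (c' * V' n * c') * (c' * hG s k) := by
    simp only [mul_assoc, c2]
  rw [e1, cU, cV, c_hG, vinv_eq,
    show (-m - n - 1 : ZMod s) = (-m + (-n + -1)) by ring, V_add, V_add]
  simp only [mul_assoc]

lemma ι_zero : ι (s := s) (0, 0, 0) = 1 := by
  show U' 0 * V' 0 * hG s 0 = 1
  rw [U_zero, V_zero, one_mul, one_mul]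
  rfl

lemma gen_act [Fact (1 < s)] (i : Fin 3) (p : X s) :
    ∃ q, (PresentedGroup.of i : Hyp0 s) * ι (s := s) p = ι (s := s) q := by
  fin_cases i
  · exact ⟨pa s p, action_a p⟩
  · exact ⟨pb s p, action_b p⟩
  · exact ⟨pc s p, action_c p⟩

lemma gen_inv (i : Fin 3) : (PresentedGroup.of i : Hyp0 s)⁻¹ = PresentedGroup.of i :=
  inv_eq_of_mul_eq_one_right (sq i)

lemma exists_step [Fact (1 < s)] (g : Hyp0 s) : ∀ p, ∃ q, g * ι (s := s) p = ι (s := s) q := by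
  refine PresentedGroup.induction_on (C := fun g => ∀ p, ∃ q, g * ι (s := s) p = ι (s := s) q) g ?_
  intro z
  induction z using FreeGroup.induction_on with
  | C1 => exact fun p => ⟨p, by rw [map_one, one_mul]⟩
  | of x => exact fun p => gen_act x p
  | inv_of x _ =>
    intro p
    have h1 : PresentedGroup.mk (triRels (uWord ^ s)) (FreeGroup.of x)⁻¹
        = (PresentedGroup.of x : Hyp0 s) := by
      rw [map_inv]; exact gen_inv x
    rw [h1]; exact gen_act x p
  | mul x y hx hy =>
    intro p
    rw [map_mul, mul_assoc]
    obtain ⟨q, hq⟩ := hy p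
    rw [hq]
    exact hx q

lemma ι_surj [Fact (1 < s)] : Function.Surjective (ι (s := s)) := by
  intro g
  obtain ⟨q, hq⟩ := exists_step g (0, 0, 0)
  rw [ι_zero, mul_one] at hq
  exact ⟨q, hq.symm⟩

lemma φhG (k : Fin 6) : φ (hG s k) ((0 : ZMod s), (0 : ZMod s), (0 : Fin 6))
    = ((0 : ZMod s), (0 : ZMod s), k) := by
  fin_cases k
  · show φ (1 : Hyp0 s) ((0 : ZMod s), (0 : ZMod s), (0 : Fin 6)) = _
    rw [map_one]; rfl
  · show φ (a s) ((0 : ZMod s), (0 : ZMod s), (0 : Fin 6)) = ((0 : ZMod s), (0 : ZMod s), (1 : Fin 6))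
    rw [φa]
    show ((-0-0 : ZMod s), (0 : ZMod s), ka 0) = _
    refine Prod.ext (by ring) rfl
  · show φ (b s) ((0 : ZMod s), (0 : ZMod s), (0 : Fin 6)) = ((0 : ZMod s), (0 : ZMod s), (2 : Fin 6))
    rw [φb]; rfl
  · show φ (a s * b s) ((0 : ZMod s), (0 : ZMod s), (0 : Fin 6)) = ((0 : ZMod s), (0 : ZMod s), (3 : Fin 6))
    rw [map_mul, φa, φb, Equiv.Perm.mul_apply]
    show ((-0-0 : ZMod s), (0 : ZMod s), ka (kb 0)) = _
    refine Prod.ext (by ring) rfl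
  · show φ (b s * a s) ((0 : ZMod s), (0 : ZMod s), (0 : Fin 6)) = ((0 : ZMod s), (0 : ZMod s), (4 : Fin 6))
    rw [map_mul, φa, φb, Equiv.Perm.mul_apply]
    show ((0 : ZMod s), (-0-0 : ZMod s), kb (ka 0)) = _
    refine Prod.ext rfl (Prod.ext (by ring) rfl)
  · show φ (a s * (b s * a s)) ((0 : ZMod s), (0 : ZMod s), (0 : Fin 6)) = ((0 : ZMod s), (0 : ZMod s), (5 : Fin 6))
    rw [map_mul, map_mul, φa, φb, Equiv.Perm.mul_apply, Equiv.Perm.mul_apply]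
    show pa s ((0 : ZMod s), (-0-0 : ZMod s), kb (ka 0)) = _
    rw [pa_apply]
    refine Prod.ext ?_ (Prod.ext (by ring) rfl)
    show -0 - (-0-0) = (0 : ZMod s)
    ring

lemma φU (x : ZMod s) : φ (U' x) = Uperm s ^ x.val := by
  simp only [U, map_pow, φu]
lemma φV (x : ZMod s) : φ (V' x) = Vperm s ^ x.val := by
  simp only [V, map_pow, φv]

lemma φι (p : X s) : φ (ι (s := s) p) ((0 : ZMod s), (0 : ZMod s), (0 : Fin 6)) = p := by
  obtain ⟨m, n, k⟩ := p
  show φ (U' m * V' n * hG s k) _ = _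
  rw [map_mul, map_mul, φU, φV, Equiv.Perm.mul_apply, Equiv.Perm.mul_apply, φhG,
    Vperm_pow, Uperm_pow]
  refine Prod.ext ?_ (Prod.ext ?_ rfl)
  · show (0 : ZMod s) + m.val = m
    rw [zero_add, ZMod.natCast_rightInverse m]
  · show (0 : ZMod s) + n.val = n
    rw [zero_add, ZMod.natCast_rightInverse n]

lemma ι_inj : Function.Injective (ι (s := s)) := by
  intro p q h
  rw [← φι p, ← φι q, h]


lemma U_natCast (n : ℕ) : U' (n : ZMod s) = u s ^ n := by
  simp only [U]
  rw [ZMod.val_natCast, ← pow_eq_pow_mod _ upow_s]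

lemma aU_swap (x : ZMod s) : a s * U' x = U' (-x) * a s := by
  rw [← aU x, mul_assoc, haa, mul_one]

lemma P1 (m m' : ZMod s) : U' m * U' m' = U' (m + m') := (U_add m m').symm
lemma P2 (m m' : ZMod s) : U' m * (U' m' * a s) = U' (m + m') * a s := by
  rw [← mul_assoc, P1]
lemma P3 (m m' : ZMod s) : (U' m * a s) * U' m' = U' (m - m') * a s := by
  rw [mul_assoc, aU_swap, ← mul_assoc, P1, sub_eq_add_neg]
lemma P4 (m m' : ZMod s) : (U' m * a s) * (U' m' * a s) = U' (m - m') := by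
  rw [← mul_assoc, P3, mul_assoc, haa, mul_one]
lemma Pinv2 (m : ZMod s) : (U' m * a s)⁻¹ = U' m * a s := by
  rw [mul_inv_rev, inv_a, U_inv, aU_swap, neg_neg]

def Lset (s d : ℕ) : Set (X s) :=
  {p | p.2.1 = 0 ∧ (∃ t : ZMod s, p.1 = t * (d : ZMod s)) ∧ (p.2.2 = 0 ∨ p.2.2 = 1)}

lemma ι_m0 (m : ZMod s) : ι (s := s) (m, 0, 0) = U' m := by
  show U' m * V' 0 * hG s 0 = U' m
  rw [V_zero, show hG s 0 = 1 from rfl, mul_one, mul_one]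
lemma ι_m1 (m : ZMod s) : ι (s := s) (m, 0, 1) = U' m * a s := by
  show U' m * V' 0 * hG s 1 = U' m * a s
  rw [V_zero, show hG s 1 = a s from rfl, mul_one]
lemma ι_0m0 (m : ZMod s) : ι (s := s) (0, m, 0) = V' m := by
  show U' 0 * V' m * hG s 0 = V' m
  rw [U_zero, show hG s 0 = 1 from rfl, one_mul, mul_one]
lemma ι_0m5 (m : ZMod s) : ι (s := s) (0, m, 5) = V' m * hG s 5 := by
  show U' 0 * V' m * hG s 5 = V' m * hG s 5
  rw [U_zero, one_mul]

def D (s d : ℕ) [NeZero s] : Subgroup (Hyp0 s) where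
  carrier := ι (s := s) '' Lset s d
  one_mem' := ⟨(0, 0, 0), ⟨rfl, ⟨0, by ring⟩, Or.inl rfl⟩, ι_zero⟩
  mul_mem' := by
    rintro x y ⟨⟨m, n, k⟩, ⟨hn, ⟨t, ht⟩, hk⟩, rfl⟩ ⟨⟨m', n', k'⟩, ⟨hn', ⟨t', ht'⟩, hk'⟩, rfl⟩
    simp only at hn hn' ht ht' hk hk'
    subst hn hn' ht ht'
    rcases hk with rfl | rfl <;> rcases hk' with rfl | rfl
    · exact ⟨(t * d + t' * d, 0, 0), ⟨rfl, ⟨t + t', by ring⟩, Or.inl rfl⟩,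
        by rw [ι_m0, ι_m0, ι_m0, P1]⟩
    · exact ⟨(t * d + t' * d, 0, 1), ⟨rfl, ⟨t + t', by ring⟩, Or.inr rfl⟩,
        by rw [ι_m0, ι_m1, ι_m1, P2]⟩
    · exact ⟨(t * d - t' * d, 0, 1), ⟨rfl, ⟨t - t', by ring⟩, Or.inr rfl⟩,
        by rw [ι_m1, ι_m0, ι_m1, P3]⟩
    · exact ⟨(t * d - t' * d, 0, 0), ⟨rfl, ⟨t - t', by ring⟩, Or.inl rfl⟩,
        by rw [ι_m1, ι_m1, ι_m0, P4]⟩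
  inv_mem' := by
    rintro x ⟨⟨m, n, k⟩, ⟨hn, ⟨t, ht⟩, hk⟩, rfl⟩
    simp only at hn ht hk
    subst hn ht
    rcases hk with rfl | rfl
    · exact ⟨(-(t * d), 0, 0), ⟨rfl, ⟨-t, by ring⟩, Or.inl rfl⟩,
        by rw [ι_m0, ι_m0, U_inv]⟩
    · exact ⟨(t * d, 0, 1), ⟨rfl, ⟨t, rfl⟩, Or.inr rfl⟩,
        by rw [ι_m1, Pinv2]⟩

lemma mem_D_iff {d : ℕ} {x : Hyp0 s} :
    x ∈ D s d ↔ ∃ p ∈ Lset s d, ι (s := s) p = x := Iff.rfl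

variable {d : ℕ}

lemma hval (t : ZMod s) : (t * (d : ZMod s)).val = (t.val * d) % s := by
  rw [ZMod.val_mul, ZMod.val_natCast]
  conv_lhs => rw [Nat.mul_mod]
  conv_rhs => rw [Nat.mul_mod]
  rw [Nat.mod_mod_of_dvd d (dvd_refl s)]

lemma Ud_pow (t : ZMod s) : U' (t * (d : ZMod s)) = (u s ^ d) ^ t.val := by
  have h1 : ((t.val * d : ℕ) : ZMod s) = t * (d : ZMod s) := by
    push_cast
    rw [ZMod.natCast_rightInverse t]
  rw [← h1, U_natCast, ← pow_mul, mul_comm d t.val, pow_mul]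

lemma H_eq_D (d : ℕ) : Subgroup.closure {u s ^ d, a s} = D s d := by
  apply le_antisymm
  · rw [Subgroup.closure_le]
    rintro x (rfl | rfl)
    · refine ⟨((d : ZMod s), 0, 0), ⟨rfl, ⟨1, by ring⟩, Or.inl rfl⟩, ?_⟩
      rw [ι_m0, U_natCast]
    · exact ⟨(0, 0, 1), ⟨rfl, ⟨0, by ring⟩, Or.inr rfl⟩, by rw [ι_m1, U_zero, one_mul]⟩
  · rintro x ⟨⟨m, n, k⟩, ⟨hn, ⟨t, ht⟩, hk⟩, rfl⟩
    simp only at hn ht hk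
    subst hn ht
    have hud : u s ^ d ∈ Subgroup.closure {u s ^ d, a s} :=
      Subgroup.subset_closure (Set.mem_insert _ _)
    have hA : a s ∈ Subgroup.closure {u s ^ d, a s} :=
      Subgroup.subset_closure (Set.mem_insert_of_mem _ rfl)
    rcases hk with rfl | rfl
    · rw [ι_m0, Ud_pow]
      exact Subgroup.pow_mem _ hud _
    · rw [ι_m1, Ud_pow]
      exact Subgroup.mul_mem _ (Subgroup.pow_mem _ hud _) hA


def e01 : Fin 2 → Fin 6 := ![0, 1]

lemma card_D (hd : d ∣ s) (hd0 : 0 < d) : Nat.card (D s d) = (s / d) * 2 := by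
  have hqd : s / d * d = s := Nat.div_mul_cancel hd
  have key : ∀ j : Fin (s / d), ((j.1 * d : ℕ) : ZMod s).val = j.1 * d := by
    intro j
    apply ZMod.val_cast_of_lt
    calc j.1 * d < (s / d) * d := by
          exact (Nat.mul_lt_mul_right hd0).2 j.isLt
      _ = s := hqd
  let F : Fin (s / d) × Fin 2 → ↥(D s d) := fun je =>
    ⟨ι (s := s) ((je.1.1 * d : ℕ), 0, e01 je.2),
      ⟨((je.1.1 * d : ℕ), 0, e01 je.2),
        ⟨rfl, ⟨(je.1.1 : ZMod s), by push_cast; ring⟩, by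
          rcases je with ⟨j, e⟩; fin_cases e
          · exact Or.inl rfl
          · exact Or.inr rfl⟩, rfl⟩⟩
  have hFbij : Function.Bijective F := by
    constructor
    · rintro ⟨j, e⟩ ⟨j', e'⟩ hF
      have h1 : (((j.1 * d : ℕ) : ZMod s), (0 : ZMod s), e01 e)
          = (((j'.1 * d : ℕ) : ZMod s), (0 : ZMod s), e01 e') := ι_inj (Subtype.ext_iff.1 hF)
      have h2 : ((j.1 * d : ℕ) : ZMod s) = ((j'.1 * d : ℕ) : ZMod s) := congrArg Prod.fst h1
      have h3 : e01 e = e01 e' := congrArg (fun p => p.2.2) h1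
      have h4 : j.1 * d = j'.1 * d := by rw [← key j, ← key j', h2]
      have h5 : j = j' := Fin.ext (Nat.eq_of_mul_eq_mul_right hd0 h4)
      have h6 : e = e' := by
        fin_cases e <;> fin_cases e' <;> first | rfl | exact absurd h3 (by decide)
      rw [h5, h6]
    · rintro ⟨x, hx⟩
      obtain ⟨⟨m, n, k⟩, ⟨hn, ⟨t, ht⟩, hk⟩, rfl⟩ := hx
      simp only at hn ht hk
      subst hn ht
      have hdvd : d ∣ (t * (d : ZMod s)).val := by
        rw [hval]
        exact (Nat.dvd_mod_iff hd).2 ⟨t.val, mul_comm _ _⟩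
      have hlt : (t * (d : ZMod s)).val / d < s / d :=
        Nat.div_lt_div_of_lt_of_dvd hd (ZMod.val_lt _)
      have hj : ((t * (d : ZMod s)).val / d) * d = (t * (d : ZMod s)).val :=
        Nat.div_mul_cancel hdvd
      have hcast : (((t * (d : ZMod s)).val / d * d : ℕ) : ZMod s) = t * (d : ZMod s) := by
        rw [hj, ZMod.natCast_rightInverse]
      rcases hk with rfl | rfl
      · refine ⟨(⟨_, hlt⟩, 0), Subtype.ext ?_⟩
        show ι (s := s) ((((t * (d : ZMod s)).val / d) * d : ℕ), 0, e01 0)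
            = ι (s := s) (t * (d : ZMod s), 0, 0)
        rw [hcast]
        rfl
      · refine ⟨(⟨_, hlt⟩, 1), Subtype.ext ?_⟩
        show ι (s := s) ((((t * (d : ZMod s)).val / d) * d : ℕ), 0, e01 1)
            = ι (s := s) (t * (d : ZMod s), 0, 1)
        rw [hcast]
        rfl
  rw [← Nat.card_eq_of_bijective F hFbij, Nat.card_prod, Nat.card_eq_fintype_card,
    Nat.card_eq_fintype_card, Fintype.card_fin, Fintype.card_fin]

lemma card_G [Fact (1 < s)] : Nat.card (Hyp0 s) = s * s * 6 := by
  rw [← Nat.card_eq_of_bijective (ι (s := s)) ⟨ι_inj, ι_surj⟩, Nat.card_prod, Nat.card_prod,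
    Nat.card_zmod, Nat.card_eq_fintype_card, Fintype.card_fin, mul_assoc]

end NF

end S8


/-- For `d ∣ s`, the subgroup `H = ⟨u^d, ρ0⟩` of the group of (3,3,3)_{(s,0)} is
core-free of index `3ds`. -/
theorem stmt8 (s d : ℕ) (hs : 2 ≤ s) (hd : d ∣ s) :
    let ρ : Fin 3 → Hyp0 s := fun i => PresentedGroup.of i
    let u : Hyp0 s := ρ 0 * ρ 1 * ρ 2 * ρ 1
    let H : Subgroup (Hyp0 s) := Subgroup.closure {u ^ d, ρ 0}
    H.normalCore = ⊥ ∧ H.index = 3 * d * s := by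
  intro ρ u0 H
  haveI : NeZero s := ⟨by omega⟩
  haveI : Fact (1 < s) := ⟨by omega⟩
  have hd0 : 0 < d := by
    rcases Nat.eq_zero_or_pos d with rfl | h
    · rw [zero_dvd_iff] at hd; omega
    · exact h
  have hHD : H = S8.D s d := S8.H_eq_D d
  constructor
  · rw [hHD, eq_bot_iff]
    intro x hx
    have hx1 : x ∈ S8.D s d := Subgroup.normalCore_le _ hx
    have hx2 : S8.b s * x * (S8.b s)⁻¹ ∈ S8.D s d := hx (S8.b s)
    obtain ⟨⟨m, n, k⟩, ⟨hn, ⟨t, ht⟩, hk⟩, rfl⟩ := hx1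
    simp only at hn ht hk
    subst hn
    rcases hk with rfl | rfl
    · have hbxb : S8.b s * S8.ι (m, 0, 0) * (S8.b s)⁻¹ = S8.ι (0, m, 0) := by
        rw [S8.inv_b, S8.ι_m0, S8.ι_0m0]
        exact S8.bU m
      rw [hbxb] at hx2
      obtain ⟨p', hp', hee⟩ := hx2
      have hp'' : p' = (0, m, 0) := S8.ι_inj hee
      subst hp''
      have hm : m = 0 := hp'.1
      subst hm
      rw [Subgroup.mem_bot, S8.ι_zero]
    · exfalso
      have hbxb : S8.b s * S8.ι (m, 0, 1) * (S8.b s)⁻¹ = S8.ι (0, m, 5) := by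
        rw [S8.inv_b, S8.ι_m1, S8.ι_0m5]
        have h1 : S8.b s * (S8.U m * S8.a s) * S8.b s
            = (S8.b s * S8.U m * S8.b s) * (S8.b s * S8.a s * S8.b s) := by
          simp only [mul_assoc, S8.b2]
        rw [h1, S8.bU, ← S8.braid_ab]
        have h2 : S8.hG s 5 = S8.a s * (S8.b s * S8.a s) := rfl
        rw [h2, mul_assoc]
      rw [hbxb] at hx2
      obtain ⟨p', hp', hee⟩ := hx2
      have hp'' : p' = (0, m, 5) := S8.ι_inj hee
      subst hp''
      rcases hp'.2.2 with h5 | h5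
      · exact (by decide : ¬ (5 : Fin 6) = 0) h5
      · exact (by decide : ¬ (5 : Fin 6) = 1) h5
  · have hcard := Subgroup.card_mul_index H
    rw [hHD, S8.card_D hd hd0] at hcard
    rw [S8.card_G] at hcard
    have hq0 : 0 < s / d := Nat.div_pos (Nat.le_of_dvd (by omega) hd) hd0
    have harith : s / d * 2 * (3 * d * s) = s * s * 6 := by
      have : s / d * 2 * (3 * d * s) = (s / d * d) * s * 6 := by ring
      rw [this, Nat.div_mul_cancel hd]
    have h9 := hcard.trans harith.symm
    rw [hHD]
    exact Nat.eq_of_mul_eq_mul_left (show 0 < s / d * 2 by omega) h9
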